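/- Fix an integer d ≥ 1 and let Q be a d×d real matrix with Q_{ij} > 0 for all i ≠ j and Σ_{j=1}^d Q_{ij} = 0 for every i. Let ν ∈ ℝ^d satisfy ν_i > 0 for all i and Σ_{i=1}^d ν_i = 1, and suppose u* ∈ U attains the infimum inf_{u∈U} Σ_{i=1}^d ν_i (Qu)_i / u_i. Define the d×d matrix Q(u*) by Q(u*)_{ij} = Q_{ij} · u*_j / u*_i for i ≠ j and Q(u*)_{ii} = −Σ_{j≠i} Q_{ij} · u*_j / u*_i. Then ν is the unique invariant probability vector of Q(u*): the transpose identity ν^T Q(u*) = 0 holds, and any μ ∈ ℝ^d with μ_i ≥ 0 for all i, Σ_{i=1}^d μ_i = 1 and μ^T Q(u*) = 0 equals ν. -/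

import Mathlib

/-- Let `Q` be a transition intensity matrix (positive off-diagonal entries, zero row
sums), `ν` a strictly positive probability vector, and `u* ∈ U` a minimizer of
`u ↦ ∑_i ν_i (Qu)_i / u_i` over `U` (the componentwise strictly positive vectors).
Define `Q(u*)_{ij} = Q_{ij} u*_j/u*_i` for `i ≠ j` and
`Q(u*)_{ii} = -∑_{j≠i} Q_{ij} u*_j/u*_i`. Then `ν` is the unique invariant probability
vector of `Q(u*)`: `νᵀ Q(u*) = 0`, and any probability vector `μ` with `μᵀ Q(u*) = 0`
equals `ν`. -/
theorem invariant_vector_of_optimizer (d : ℕ) (hd : 1 ≤ d)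
    (Q : Matrix (Fin d) (Fin d) ℝ)
    (hQpos : ∀ i j : Fin d, i ≠ j → 0 < Q i j)
    (hQrow : ∀ i : Fin d, ∑ j : Fin d, Q i j = 0)
    (ν : Fin d → ℝ) (hνpos : ∀ i : Fin d, 0 < ν i) (hνsum : ∑ i : Fin d, ν i = 1)
    (ustar : Fin d → ℝ) (hupos : ∀ i : Fin d, 0 < ustar i)
    (hmin : ∀ u : Fin d → ℝ, (∀ i : Fin d, 0 < u i) →
      ∑ i : Fin d, ν i * (Q.mulVec ustar i / ustar i) ≤
        ∑ i : Fin d, ν i * (Q.mulVec u i / u i))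
    (Qstar : Matrix (Fin d) (Fin d) ℝ)
    (hQstar : ∀ i j : Fin d,
      Qstar i j = if i = j then -∑ j' ∈ Finset.univ.erase i, Q i j' * (ustar j' / ustar i)
        else Q i j * (ustar j / ustar i)) :
    Matrix.vecMul ν Qstar = 0 ∧
      ∀ μ : Fin d → ℝ, (∀ i : Fin d, 0 ≤ μ i) → ∑ i : Fin d, μ i = 1 →
        Matrix.vecMul μ Qstar = 0 → μ = ν := by
  classical
  have hune : ∀ i : Fin d, ustar i ≠ 0 := fun i => (hupos i).ne'
  -- first-order condition at the minimizer
  have key : ∀ k : Fin d,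
      (∑ i ∈ Finset.univ.erase k, ν i * (Q i k / ustar i)) +
        ν k * ((Q k k * ustar k - Q.mulVec ustar k) / (ustar k * ustar k)) = 0 := by
    intro k
    set B := ∑ i ∈ Finset.univ.erase k, ν i * (Q i k / ustar i) with hB
    set A := ∑ i ∈ Finset.univ.erase k, ν i * (Q.mulVec ustar i / ustar i) with hA
    set g : ℝ → ℝ :=
      fun t => A + B * t + ν k * ((Q.mulVec ustar k + t * Q k k) / (ustar k + t)) with hg
    have hmv : ∀ (t : ℝ) (i : Fin d),
        Q.mulVec (Function.update ustar k (ustar k + t)) i = Q.mulVec ustar i + t * Q i k := by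
      intro t i
      have hupd : Function.update ustar k (ustar k + t)
          = fun j => ustar j + t * (if j = k then 1 else 0) := by
        funext j
        by_cases h : j = k
        · subst h; simp
        · simp [Function.update_of_ne h, h]
      rw [hupd]
      simp only [Matrix.mulVec, dotProduct, mul_add, Finset.sum_add_distrib]
      congr 1
      rw [Finset.sum_congr rfl (fun j _ => by rw [mul_comm t, ← mul_assoc])]
      rw [← Finset.sum_mul]
      simp [Finset.sum_ite_eq', mul_comm]
    have hFg : ∀ t : ℝ,
        ∑ i : Fin d, ν i * (Q.mulVec (Function.update ustar k (ustar k + t)) i /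
          Function.update ustar k (ustar k + t) i) = g t := by
      intro t
      rw [← Finset.add_sum_erase _ _ (Finset.mem_univ k)]
      have h1 : ∀ i ∈ Finset.univ.erase k,
          ν i * (Q.mulVec (Function.update ustar k (ustar k + t)) i /
            Function.update ustar k (ustar k + t) i)
          = ν i * (Q.mulVec ustar i / ustar i) + (ν i * (Q i k / ustar i)) * t := by
        intro i hi
        have hik : i ≠ k := Finset.ne_of_mem_erase hi
        rw [hmv, Function.update_of_ne hik]
        field_simp
      rw [Finset.sum_congr rfl h1, Finset.sum_add_distrib, ← Finset.sum_mul,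
        hmv, Function.update_self]
      simp only [hg, ← hA, ← hB]
      ring
    have hg0 : g 0 = ∑ i : Fin d, ν i * (Q.mulVec ustar i / ustar i) := by
      rw [← hFg 0]
      congr 1
      funext i
      rw [add_zero, Function.update_eq_self]
    have hlm : IsLocalMin g 0 := by
      have hmem : Set.Ioo (-(ustar k)) (ustar k) ∈ nhds (0:ℝ) :=
        Ioo_mem_nhds (by linarith [hupos k]) (hupos k)
      filter_upwards [hmem] with t ht
      have hpos : ∀ i : Fin d, 0 < Function.update ustar k (ustar k + t) i := by
        intro i
        by_cases h : i = k
        · subst h; rw [Function.update_self]; linarith [ht.1]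
        · rw [Function.update_of_ne h]; exact hupos i
      rw [hg0, ← hFg t]
      exact hmin _ hpos
    have h1 : HasDerivAt (fun t : ℝ => Q.mulVec ustar k + t * Q k k) (Q k k) 0 := by
      simpa using ((hasDerivAt_id (0:ℝ)).mul_const (Q k k)).const_add (Q.mulVec ustar k)
    have h2 : HasDerivAt (fun t : ℝ => ustar k + t) 1 0 := by
      simpa using (hasDerivAt_id (0:ℝ)).const_add (ustar k)
    have h3 := (h1.div h2 (by simpa using hune k)).const_mul (ν k)
    have h4 : HasDerivAt (fun t : ℝ => A + B * t) B 0 := by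
      simpa using ((hasDerivAt_id (0:ℝ)).const_mul B).const_add A
    have h5 : HasDerivAt g
        (B + ν k * ((Q k k * (ustar k + 0) - (Q.mulVec ustar k + 0 * Q k k) * 1) /
          (ustar k + 0) ^ 2)) 0 := h4.add h3
    have hz := hlm.deriv_eq_zero
    rw [h5.deriv] at hz
    have e : (Q k k * (ustar k + 0) - (Q.mulVec ustar k + 0 * Q k k) * 1) / (ustar k + 0) ^ 2
        = (Q k k * ustar k - Q.mulVec ustar k) / (ustar k * ustar k) := by
      rw [add_zero, zero_mul, add_zero, mul_one, sq]
    rw [e] at hz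
    exact hz
  -- part 1
  have part1 : Matrix.vecMul ν Qstar = 0 := by
    funext k
    have hv : Matrix.vecMul ν Qstar k = ∑ i : Fin d, ν i * Qstar i k := by
      simp [Matrix.vecMul, dotProduct]
    have hmvk : Q.mulVec ustar k = Q k k * ustar k + ∑ j ∈ Finset.univ.erase k, Q k j * ustar j := by
      rw [show Q.mulVec ustar k = ∑ j : Fin d, Q k j * ustar j from by
        simp [Matrix.mulVec, dotProduct]]
      rw [← Finset.add_sum_erase _ _ (Finset.mem_univ k)]
    have e1 : ∑ i ∈ Finset.univ.erase k, ν i * Qstar i k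
        = ustar k * ∑ i ∈ Finset.univ.erase k, ν i * (Q i k / ustar i) := by
      rw [Finset.mul_sum]
      refine Finset.sum_congr rfl fun i hi => ?_
      rw [hQstar i k, if_neg (Finset.ne_of_mem_erase hi)]
      ring
    have e2 : ν k * Qstar k k
        = ustar k * (ν k * ((Q k k * ustar k - Q.mulVec ustar k) / (ustar k * ustar k))) := by
      rw [hQstar k k, if_pos rfl, hmvk]
      have hS : ∑ j ∈ Finset.univ.erase k, Q k j * (ustar j / ustar k)
          = (∑ j ∈ Finset.univ.erase k, Q k j * ustar j) / ustar k := by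
        rw [Finset.sum_div]
        exact Finset.sum_congr rfl fun j _ => (mul_div_assoc _ _ _).symm
      rw [hS]
      have h' : Q k k * ustar k -
          (Q k k * ustar k + ∑ j ∈ Finset.univ.erase k, Q k j * ustar j)
          = -(∑ j ∈ Finset.univ.erase k, Q k j * ustar j) := by ring
      rw [h']
      generalize (∑ j ∈ Finset.univ.erase k, Q k j * ustar j) = S
      rw [← div_div, neg_div, mul_left_comm, mul_comm (ustar k), div_mul_cancel₀ _ (hune k)]
    show Matrix.vecMul ν Qstar k = (0 : Fin d → ℝ) k
    rw [hv, ← Finset.add_sum_erase _ _ (Finset.mem_univ k), e1, e2, ← mul_add, add_comm,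
      key k, mul_zero]
    rfl
  refine ⟨part1, ?_⟩
  -- column equations
  have hcol : ∀ (w : Fin d → ℝ), Matrix.vecMul w Qstar = 0 → ∀ k : Fin d,
      w k * Qstar k k + ∑ i ∈ Finset.univ.erase k, w i * Qstar i k = 0 := by
    intro w hw k
    have h := congrFun hw k
    have hv : Matrix.vecMul w Qstar k = ∑ i : Fin d, w i * Qstar i k := by
      simp [Matrix.vecMul, dotProduct]
    rw [hv] at h
    simp only [Pi.zero_apply] at h
    rw [Finset.add_sum_erase Finset.univ (fun i => w i * Qstar i k) (Finset.mem_univ k)]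
    exact h
  intro μ hμ0 hμ1 hμinv
  obtain ⟨k, -, hk⟩ := Finset.exists_max_image Finset.univ (fun i => μ i / ν i)
    (Finset.univ_nonempty_iff.2 ⟨⟨0, hd⟩⟩)
  set r := μ k / ν k with hr
  have hμk : μ k = r * ν k := by
    rw [hr, div_mul_cancel₀ _ (hνpos k).ne']
  have hle : ∀ i : Fin d, μ i ≤ r * ν i := by
    intro i
    have h := hk i (Finset.mem_univ i)
    calc μ i = (μ i / ν i) * ν i := by rw [div_mul_cancel₀ _ (hνpos i).ne']
      _ ≤ r * ν i := mul_le_mul_of_nonneg_right h (hνpos i).le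
  have hνk := hcol ν part1 k
  have hμck := hcol μ hμinv k
  have hQik : ∀ i ∈ Finset.univ.erase k, 0 < Qstar i k := by
    intro i hi
    have hik : i ≠ k := Finset.ne_of_mem_erase hi
    rw [hQstar i k, if_neg hik]
    exact mul_pos (hQpos i k hik) (div_pos (hupos k) (hupos i))
  have hsum : ∑ i ∈ Finset.univ.erase k, (r * ν i - μ i) * Qstar i k = 0 := by
    have expand : ∑ i ∈ Finset.univ.erase k, (r * ν i - μ i) * Qstar i k
        = r * ∑ i ∈ Finset.univ.erase k, ν i * Qstar i k
          - ∑ i ∈ Finset.univ.erase k, μ i * Qstar i k := by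
      rw [Finset.mul_sum, ← Finset.sum_sub_distrib]
      exact Finset.sum_congr rfl fun i _ => by ring
    have h1 : ∑ i ∈ Finset.univ.erase k, ν i * Qstar i k = -(ν k * Qstar k k) := by
      linarith [hνk]
    have h2 : ∑ i ∈ Finset.univ.erase k, μ i * Qstar i k = -(μ k * Qstar k k) := by
      linarith [hμck]
    rw [expand, h1, h2, hμk]
    ring
  have hterm := (Finset.sum_eq_zero_iff_of_nonneg
    (fun i hi => mul_nonneg (by linarith [hle i]) (hQik i hi).le)).1 hsum
  have hall : ∀ i : Fin d, μ i = r * ν i := by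
    intro i
    by_cases h : i = k
    · subst h; exact hμk
    · have hi : i ∈ Finset.univ.erase k := Finset.mem_erase.2 ⟨h, Finset.mem_univ i⟩
      have ht := hterm i hi
      have hq : Qstar i k ≠ 0 := (hQik i hi).ne'
      have : r * ν i - μ i = 0 := by
        rcases mul_eq_zero.1 ht with h' | h'
        · exact h'
        · exact absurd h' hq
      linarith
  have hr1 : r = 1 := by
    have hs : ∑ i : Fin d, μ i = r * ∑ i : Fin d, ν i := by
      rw [Finset.mul_sum]
      exact Finset.sum_congr rfl fun i _ => hall i
    rw [hμ1, hνsum, mul_one] at hs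
    exact hs.symm
  funext i
  rw [hall i, hr1, one_mul]
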